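/- Fix λ > 0 and let C = {θ ∈ ℝⁿ : θ₁ ≤ θ₂ ≤ ⋯ ≤ θ_n and θ_n − θ₁ ≤ λ} be the bounded isotonic constraint set, written as C = {θ : Aθ ≤ b} where for 1 ≤ i ≤ n−1 row a_i has +1 in position i, −1 in position i+1 and b_i = 0, and row a_n has +1 in position n, −1 in position 1 and b_n = λ. Let θ̂_λ(y) = P_C(y) and J_y = {1 ≤ i ≤ n : ⟨a_i, θ̂_λ(y)⟩ = b_i}. Let G_{J_y} be the undirected graph on vertices {1,…,n} with an edge between i and i+1 for each i ∈ J_y ∩ {1,…,n−1} and an edge between n and 1 if n ∈ J_y. Then for Lebesgue-almost every y ∈ ℝⁿ, θ̂_λ is differentiable at y and its divergence equals the number of connected components of G_{J_y}: D(y) = ω(G_{J_y}). -/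

import Mathlib

open Matrix MeasureTheory

/-- The divergence of a map `ℝⁿ → ℝⁿ` at `y`: the trace of its derivative,
`∑ i, ∂fᵢ/∂yᵢ (y)`. -/
noncomputable def divg {n : ℕ} (f : (Fin n → ℝ) → (Fin n → ℝ)) (y : Fin n → ℝ) : ℝ :=
  ∑ i, fderiv ℝ f y (Pi.single i 1) i

namespace BddIso
variable {n : ℕ}

/-! ### inner product basics -/

noncomputable def ip (x y : Fin n → ℝ) : ℝ := ∑ i, x i * y i

lemma ip_add_left (x y z : Fin n → ℝ) : ip (x + y) z = ip x z + ip y z := by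
  simp [ip, add_mul, Finset.sum_add_distrib]
lemma ip_sub_left (x y z : Fin n → ℝ) : ip (x - y) z = ip x z - ip y z := by
  simp [ip, sub_mul, Finset.sum_sub_distrib]
lemma ip_smul_left (c : ℝ) (x z : Fin n → ℝ) : ip (c • x) z = c * ip x z := by
  simp [ip, Finset.mul_sum, mul_assoc]
lemma ip_comm (x y : Fin n → ℝ) : ip x y = ip y x := by
  simp [ip, mul_comm]
lemma ip_add_right (x y z : Fin n → ℝ) : ip z (x + y) = ip z x + ip z y := by
  rw [ip_comm, ip_add_left, ip_comm x z, ip_comm y z]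
lemma ip_sub_right (x y z : Fin n → ℝ) : ip z (x - y) = ip z x - ip z y := by
  rw [ip_comm, ip_sub_left, ip_comm x z, ip_comm y z]
lemma ip_smul_right (c : ℝ) (x z : Fin n → ℝ) : ip z (c • x) = c * ip z x := by
  rw [ip_comm, ip_smul_left, ip_comm]
lemma ip_neg_right (x z : Fin n → ℝ) : ip z (-x) = - ip z x := by
  simp [ip]
lemma ip_sum_left {α : Type*} (s : Finset α) (f : α → (Fin n → ℝ)) (z : Fin n → ℝ) :
    ip (∑ j ∈ s, f j) z = ∑ j ∈ s, ip (f j) z := by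
  simp [ip, Finset.sum_mul]
  rw [Finset.sum_comm]
lemma ip_self_nonneg (x : Fin n → ℝ) : 0 ≤ ip x x :=
  Finset.sum_nonneg fun i _ => mul_self_nonneg _
lemma eq_of_ip_self_le_zero {x : Fin n → ℝ} (h : ip x x ≤ 0) : x = 0 := by
  have heq : ip x x = 0 := le_antisymm h (ip_self_nonneg x)
  have h0 := (Finset.sum_eq_zero_iff_of_nonneg (fun i _ => mul_self_nonneg (x i))).1 heq
  funext i
  exact mul_self_eq_zero.mp (h0 i (Finset.mem_univ i))
lemma ip_expand (u d : Fin n → ℝ) (t : ℝ) :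
    ip (u - t • d) (u - t • d) = ip u u - 2 * t * ip u d + t ^ 2 * ip d d := by
  simp only [ip_sub_left, ip_sub_right, ip_smul_left, ip_smul_right, ip_comm d u]
  ring
lemma sq_dist (y θ : Fin n → ℝ) : ∑ j, (y j - θ j) ^ 2 = ip (y - θ) (y - θ) := by
  simp [ip, pow_two]

/-! ### Fin cyclic facts -/

lemma val_one_of [NeZero n] (h : 1 < n) : (1 : Fin n).val = 1 := by
  simp [Fin.val_one', Nat.mod_eq_of_lt h]
lemma fin_add_one_val [NeZero n] {i : Fin n} (h : i.val + 1 < n) :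
    (i + 1) = (⟨i.val + 1, h⟩ : Fin n) := by
  ext; rw [Fin.add_def]
  simp [val_one_of (by omega : 1 < n), Nat.mod_eq_of_lt h]
lemma fin_add_one_last [NeZero n] {i : Fin n} (h : i.val + 1 = n) :
    i + 1 = (⟨0, by omega⟩ : Fin n) := by
  ext; rw [Fin.add_def]; simp [Fin.val_one']
  rcases Nat.lt_or_ge 1 n with h1 | h1
  · rw [h, Nat.mod_self]
  · have : n = 1 := by omega
    subst this; simp [Nat.mod_one]
lemma fin_last_eq {i : Fin n} (h : i.val + 1 = n) : i = (⟨n - 1, by omega⟩ : Fin n) := by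
  ext; simp; omega

/-! ### the constraint vectors -/

def aa [NeZero n] (i : Fin n) : Fin n → ℝ := Pi.single i 1 - Pi.single (i+1) 1
noncomputable def bb (lam : ℝ) (i : Fin n) : ℝ := if i.val + 1 = n then lam else 0

lemma ip_single_left (i : Fin n) (x : Fin n → ℝ) : ip (Pi.single i 1) x = x i := by
  simp [ip, Pi.single_apply]
lemma ip_aa [NeZero n] (i : Fin n) (x : Fin n → ℝ) : ip (aa i) x = x i - x (i + 1) := by
  rw [aa, ip_sub_left, ip_single_left, ip_single_left]
lemma aa_apply [NeZero n] (i k : Fin n) :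
    aa i k = (if k = i then (1:ℝ) else 0) - (if k = i + 1 then 1 else 0) := by
  simp [aa, Pi.single_apply]

section Fin
variable [NeZero n]

lemma cyclic_const {c : Fin n → ℝ} (h : ∀ k, c (k + 1) = c k) : ∀ k, c k = c 0 := by
  intro k
  obtain ⟨m, hm⟩ := k
  induction m with
  | zero =>
      have : (⟨0, hm⟩ : Fin n) = 0 := by ext; simp
      rw [this]
  | succ m ih =>
      have hm' : m < n := by omega
      have heq : (⟨m + 1, hm⟩ : Fin n) = (⟨m, hm'⟩ : Fin n) + 1 :=
        (fin_add_one_val (i := ⟨m, hm'⟩) hm).symm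
      rw [heq, h]
      exact ih hm'

lemma indep_aa {J : Finset (Fin n)} (hJ : J ≠ Finset.univ) :
    LinearIndependent ℝ (fun j : J => aa (j : Fin n)) := by
  classical
  obtain ⟨i₀, hi₀⟩ : ∃ i₀, i₀ ∉ J := by
    by_contra hcon
    push_neg at hcon
    exact hJ (Finset.eq_univ_iff_forall.2 hcon)
  rw [Fintype.linearIndependent_iff]
  intro c hc
  set c' : Fin n → ℝ := fun j => if h : j ∈ J then c ⟨j, h⟩ else 0 with hc'
  have hsum : ∑ j : Fin n, c' j • aa j = 0 := by
    rw [show (∑ j : Fin n, c' j • aa j) = ∑ j ∈ J, c' j • aa j by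
      apply (Finset.sum_subset (Finset.subset_univ J) _).symm
      intro x _ hx
      simp [hc', hx]]
    rw [← Finset.sum_attach J (fun j => c' j • aa j)]
    rw [← hc]
    apply Finset.sum_congr rfl
    intro j _
    simp [hc', j.2]
  have happ : ∀ k : Fin n, c' k - c' (k - 1) = 0 := by
    intro k
    have h0 := congrFun hsum k
    simp only [Finset.sum_apply, Pi.smul_apply, smul_eq_mul, Pi.zero_apply] at h0
    have hterm : ∀ j : Fin n, c' j * aa j k
        = (if j = k then c' j else 0) - (if j = k - 1 then c' j else 0) := by
      intro j
      have hiff : (k = j + 1) = (j = k - 1) := by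
        apply propext
        constructor
        · intro h; rw [h, add_sub_cancel_right]
        · intro h; rw [h, sub_add_cancel]
      rw [aa_apply, show (if k = j then (1:ℝ) else 0) = (if j = k then 1 else 0) by
          simp [eq_comm]]
      simp only [hiff]
      rw [mul_sub, mul_ite, mul_one, mul_zero, mul_ite, mul_one, mul_zero]
    rw [Finset.sum_congr rfl (fun j _ => hterm j), Finset.sum_sub_distrib,
      Finset.sum_ite_eq' Finset.univ k c', Finset.sum_ite_eq' Finset.univ (k-1) c'] at h0
    simpa using h0
  have hstep : ∀ k : Fin n, c' (k + 1) = c' k := by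
    intro k
    have := happ (k + 1)
    rw [add_sub_cancel_right] at this
    linarith
  have hconst := cyclic_const hstep
  have hzero : ∀ k, c' k = 0 := by
    intro k
    rw [hconst k, ← hconst i₀]
    simp [hc', hi₀]
  intro j
  have := hzero j
  simpa [hc', j.2] using this

end Fin

/-! ### subspaces attached to an active set -/

section Alg
variable [NeZero n]

def VJ (J : Finset (Fin n)) : Submodule ℝ (Fin n → ℝ) where
  carrier := {x | ∀ j ∈ J, ip (aa j) x = 0}
  add_mem' := by intro x y hx hy j hj; rw [ip_add_right, hx j hj, hy j hj]; ring
  zero_mem' := by intro j hj; simp [ip]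
  smul_mem' := by intro c x hx j hj; rw [ip_smul_right, hx j hj]; ring

lemma mem_VJ {J : Finset (Fin n)} {x : Fin n → ℝ} :
    x ∈ VJ J ↔ ∀ j ∈ J, ip (aa j) x = 0 := Iff.rfl

def WJ (J : Finset (Fin n)) : Submodule ℝ (Fin n → ℝ) :=
  Submodule.span ℝ (Set.range (fun j : J => aa (j : Fin n)))

lemma ip_eq_zero_of_WJ_VJ {J : Finset (Fin n)} {w x : Fin n → ℝ}
    (hw : w ∈ WJ J) (hx : x ∈ VJ J) : ip w x = 0 := by
  refine Submodule.span_induction ?_ ?_ ?_ ?_ hw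
  · rintro w ⟨j, rfl⟩
    exact hx j j.2
  · simp [ip]
  · intro u v _ _ hu hv
    rw [ip_add_left, hu, hv]; ring
  · intro c u _ hu
    rw [ip_smul_left, hu]; ring

lemma WJ_inf_VJ {J : Finset (Fin n)} : WJ J ⊓ VJ J = ⊥ := by
  rw [eq_bot_iff]
  rintro x ⟨hxW, hxV⟩
  have := ip_eq_zero_of_WJ_VJ hxW hxV
  rw [Submodule.mem_bot]
  exact eq_of_ip_self_le_zero this.le

noncomputable def lamMap (J : Finset (Fin n)) : (Fin n → ℝ) →ₗ[ℝ] (J → ℝ) where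
  toFun x := fun j => ip (aa (j : Fin n)) x
  map_add' x y := funext fun j => ip_add_right _ _ _
  map_smul' c x := funext fun j => by simp [ip_smul_right]

lemma ker_lamMap (J : Finset (Fin n)) : LinearMap.ker (lamMap J) = VJ J := by
  ext x
  simp only [LinearMap.mem_ker, mem_VJ]
  constructor
  · intro h j hj
    exact congrFun h ⟨j, hj⟩
  · intro h
    funext j
    exact h j j.2

lemma finrank_WJ {J : Finset (Fin n)} (hJ : J ≠ Finset.univ) :
    Module.finrank ℝ (WJ J) = J.card := by
  rw [WJ, finrank_span_eq_card (indep_aa hJ), Fintype.card_coe]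

lemma lamMap_surj {J : Finset (Fin n)} (hJ : J ≠ Finset.univ) :
    Function.Surjective (lamMap J) := by
  have hrange : LinearMap.range ((lamMap J).comp (WJ J).subtype) = ⊤ := by
    apply Submodule.eq_top_of_finrank_eq
    rw [LinearMap.finrank_range_of_inj]
    · rw [finrank_WJ hJ, Module.finrank_pi, Fintype.card_coe]
    · rw [← LinearMap.ker_eq_bot, eq_bot_iff]
      intro x hx
      have hxV : (x : Fin n → ℝ) ∈ VJ J := by
        rw [← ker_lamMap]
        exact hx
      have : (x : Fin n → ℝ) ∈ WJ J ⊓ VJ J := ⟨x.2, hxV⟩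
      rw [WJ_inf_VJ, Submodule.mem_bot] at this
      rw [Submodule.mem_bot, Subtype.ext_iff]
      exact this
  intro g
  have : g ∈ LinearMap.range ((lamMap J).comp (WJ J).subtype) := hrange ▸ Submodule.mem_top
  obtain ⟨w, hw⟩ := this
  exact ⟨w, hw⟩

lemma exists_dual {J : Finset (Fin n)} (hJ : J ≠ Finset.univ) {i : Fin n} (hi : i ∈ J) :
    ∃ d : Fin n → ℝ, ∀ j ∈ J, ip (aa j) d = if j = i then 1 else 0 := by
  classical
  obtain ⟨d, hd⟩ := lamMap_surj hJ (Pi.single ⟨i, hi⟩ 1)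
  refine ⟨d, fun j hj => ?_⟩
  have := congrFun hd ⟨j, hj⟩
  simp only [lamMap, LinearMap.coe_mk, AddHom.coe_mk] at this
  rw [this, Pi.single_apply]
  simp [Subtype.ext_iff]

lemma finrank_VJ {J : Finset (Fin n)} (hJ : J ≠ Finset.univ) :
    Module.finrank ℝ (VJ J) = n - J.card := by
  have h1 := LinearMap.finrank_range_add_finrank_ker (lamMap J)
  rw [ker_lamMap, LinearMap.range_eq_top.2 (lamMap_surj hJ)] at h1
  rw [finrank_top, Module.finrank_pi, Fintype.card_coe,
    Module.finrank_fintype_fun_eq_card, Fintype.card_fin] at h1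
  omega

lemma WJ_sup_VJ {J : Finset (Fin n)} (hJ : J ≠ Finset.univ) : WJ J ⊔ VJ J = ⊤ := by
  apply Submodule.eq_top_of_finrank_eq
  have h1 := Submodule.finrank_sup_add_finrank_inf_eq (WJ J) (VJ J)
  rw [WJ_inf_VJ] at h1
  have hcard : J.card ≤ n := by
    have := Finset.card_le_univ J
    simpa using this
  simp only [finrank_bot, add_zero, finrank_WJ hJ, finrank_VJ hJ] at h1
  rw [Module.finrank_fintype_fun_eq_card, Fintype.card_fin]
  omega

lemma mem_WJ_of_perp {J : Finset (Fin n)} (hJ : J ≠ Finset.univ) {x : Fin n → ℝ}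
    (hx : ∀ v ∈ VJ J, ip x v = 0) : x ∈ WJ J := by
  have : x ∈ WJ J ⊔ VJ J := (WJ_sup_VJ hJ).symm ▸ Submodule.mem_top
  obtain ⟨w, hw, v, hv, rfl⟩ := Submodule.mem_sup.1 this
  have h1 : ip (w + v) v = 0 := hx v hv
  have h2 : ip w v = 0 := ip_eq_zero_of_WJ_VJ hw hv
  rw [ip_add_left, h2, zero_add] at h1
  rw [eq_of_ip_self_le_zero h1.le, add_zero]
  exact hw

/-- expression of elements of WJ in terms of coefficients -/
lemma mem_WJ_iff_exists {J : Finset (Fin n)} {x : Fin n → ℝ} :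
    x ∈ WJ J ↔ ∃ c : J → ℝ, x = ∑ j : J, c j • aa (j : Fin n) := by
  rw [WJ, Submodule.mem_span_range_iff_exists_fun]
  constructor
  · rintro ⟨c, hc⟩; exact ⟨c, hc.symm⟩
  · rintro ⟨c, hc⟩; exact ⟨c, hc.symm⟩

/-- coefficients recovered by dual vectors -/
lemma coeff_eq_ip_dual {J : Finset (Fin n)} {c : J → ℝ} {d : Fin n → ℝ} {i : Fin n} (hi : i ∈ J)
    (hd : ∀ j ∈ J, ip (aa j) d = if j = i then 1 else 0) :
    ip (∑ j : J, c j • aa (j : Fin n)) d = c ⟨i, hi⟩ := by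
  classical
  have : ∀ j : J, ip (c j • aa (j : Fin n)) d = if j = ⟨i, hi⟩ then c j else 0 := by
    intro j
    rw [ip_smul_left, hd j j.2]
    by_cases h : (j : Fin n) = i
    · rw [if_pos h, if_pos (Subtype.ext h), mul_one]
    · rw [if_neg h, if_neg (fun hh => h (by rw [hh])), mul_zero]
  rw [ip_sum_left]
  rw [Finset.sum_congr rfl (fun j _ => this j)]
  simp

end Alg

/-! ### graph components and the averaging projection -/

section Graph
variable (G : SimpleGraph (Fin n))

/-- fiber of a connected component as a Finset -/
noncomputable def fib (c : G.ConnectedComponent) : Finset (Fin n) :=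
  @Finset.filter _ (fun m => G.connectedComponentMk m = c) (Classical.decPred _) Finset.univ

lemma mem_fib {m : Fin n} {c : G.ConnectedComponent} :
    m ∈ fib G c ↔ G.connectedComponentMk m = c := by
  simp [fib]

lemma self_mem_fib (k : Fin n) : k ∈ fib G (G.connectedComponentMk k) :=
  (mem_fib G).2 rfl

lemma fib_card_pos (c : G.ConnectedComponent) : 0 < (fib G c).card := by
  obtain ⟨v, rfl⟩ := c.exists_rep
  exact Finset.card_pos.2 ⟨v, self_mem_fib G v⟩

/-- the averaging projection onto functions constant on connected components -/
noncomputable def PP (x : Fin n → ℝ) : Fin n → ℝ := fun k =>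
  (∑ m ∈ fib G (G.connectedComponentMk k), x m) / (fib G (G.connectedComponentMk k)).card

lemma PP_eq_of_mk_eq {k k' : Fin n} (h : G.connectedComponentMk k = G.connectedComponentMk k')
    (x : Fin n → ℝ) : PP G x k = PP G x k' := by
  rw [PP, PP, h]

lemma PP_add (x y : Fin n → ℝ) : PP G (x + y) = PP G x + PP G y := by
  funext k
  simp [PP, Finset.sum_add_distrib, add_div]

lemma PP_smul (c : ℝ) (x : Fin n → ℝ) : PP G (c • x) = c • PP G x := by
  funext k
  simp [PP, ← Finset.mul_sum, mul_div_assoc]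


noncomputable def Plin (G : SimpleGraph (Fin n)) : (Fin n → ℝ) →ₗ[ℝ] (Fin n → ℝ) where
  toFun := PP G
  map_add' := PP_add G
  map_smul' := fun c x => by simpa using PP_smul G c x

/-- functions constant on components are fixed by `PP` -/
lemma PP_of_const {x : Fin n → ℝ}
    (hx : ∀ u v, G.connectedComponentMk u = G.connectedComponentMk v → x u = x v) :
    PP G x = x := by
  funext k
  rw [PP]
  have : ∀ m ∈ fib G (G.connectedComponentMk k), x m = x k := by
    intro m hm
    exact hx m k ((mem_fib G).1 hm)
  rw [Finset.sum_congr rfl this, Finset.sum_const, nsmul_eq_mul]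
  have hne : ((fib G (G.connectedComponentMk k)).card : ℝ) ≠ 0 := by
    exact_mod_cast (fib_card_pos G _).ne'
  field_simp

/-- the residual has zero sum over each fiber -/
lemma sum_fib_residual (x : Fin n → ℝ) (c : G.ConnectedComponent) :
    ∑ m ∈ fib G c, (x m - PP G x m) = 0 := by
  rw [Finset.sum_sub_distrib]
  have : ∀ m ∈ fib G c, PP G x m = (∑ m ∈ fib G c, x m) / (fib G c).card := by
    intro m hm
    rw [PP, (mem_fib G).1 hm]
  rw [Finset.sum_congr rfl this, Finset.sum_const, nsmul_eq_mul]
  have hne : ((fib G c).card : ℝ) ≠ 0 := by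
    exact_mod_cast (fib_card_pos G c).ne'
  field_simp
  ring

/-- trace of the averaging projection equals the number of connected components -/
lemma trace_PP [Fintype G.ConnectedComponent] :
    ∑ k, PP G (Pi.single k 1) k = (Fintype.card G.ConnectedComponent : ℝ) := by
  classical
  have hterm : ∀ k : Fin n, PP G (Pi.single k 1) k
      = ((fib G (G.connectedComponentMk k)).card : ℝ)⁻¹ := by
    intro k
    rw [PP]
    have : ∀ m ∈ fib G (G.connectedComponentMk k), (Pi.single (M := fun _ => ℝ) k 1) m
        = if m = k then (1:ℝ) else 0 := by
      intro m _
      simp [Pi.single_apply]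
    rw [Finset.sum_congr rfl this, Finset.sum_ite_eq' _ k (fun _ => (1:ℝ)),
      if_pos (self_mem_fib G k), one_div]
  rw [Finset.sum_congr rfl (fun k _ => hterm k)]
  rw [← Finset.sum_fiberwise Finset.univ (fun k => G.connectedComponentMk k)
    (fun k => ((fib G (G.connectedComponentMk k)).card : ℝ)⁻¹)]
  have : ∀ c : G.ConnectedComponent,
      (∑ k ∈ Finset.univ.filter (fun k => G.connectedComponentMk k = c),
        ((fib G (G.connectedComponentMk k)).card : ℝ)⁻¹) = 1 := by
    intro c
    have h1 : ∀ k ∈ Finset.univ.filter (fun k => G.connectedComponentMk k = c),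
        ((fib G (G.connectedComponentMk k)).card : ℝ)⁻¹ = ((fib G c).card : ℝ)⁻¹ := by
      intro k hk
      rw [(Finset.mem_filter.1 hk).2]
    rw [Finset.sum_congr rfl h1, Finset.sum_const, nsmul_eq_mul]
    have hcardeq : (Finset.univ.filter (fun k => G.connectedComponentMk k = c)).card
        = (fib G c).card := by
      apply Finset.card_bij (fun a _ => a)
      · intro a ha; rw [mem_fib]; exact (Finset.mem_filter.1 ha).2
      · intro a _ b _ h; exact h
      · intro b hb; exact ⟨b, Finset.mem_filter.2 ⟨Finset.mem_univ b, (mem_fib G).1 hb⟩, rfl⟩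
    rw [hcardeq, mul_inv_cancel₀]
    exact_mod_cast (fib_card_pos G c).ne'
  rw [Finset.sum_congr rfl (fun c _ => this c), Finset.sum_const, nsmul_eq_mul, mul_one,
    Finset.card_univ]

end Graph

/-! ### membership characterization -/

lemma memC_iff [NeZero n] (hn : 0 < n) (lam : ℝ) {C : Set (Fin n → ℝ)}
    (hC : C = {θ | (∀ i : ℕ, ∀ h : i + 1 < n, θ ⟨i, Nat.lt_of_succ_lt h⟩ ≤ θ ⟨i + 1, h⟩) ∧
      θ ⟨n - 1, Nat.sub_lt hn Nat.one_pos⟩ - θ ⟨0, hn⟩ ≤ lam}) (θ : Fin n → ℝ) :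
    θ ∈ C ↔ ∀ i : Fin n, ip (aa i) θ ≤ bb lam i := by
  rw [hC]
  constructor
  · rintro ⟨h1, h2⟩ i
    rw [ip_aa, bb]
    by_cases hi : i.val + 1 = n
    · rw [if_pos hi, fin_add_one_last hi]
      have : θ i = θ ⟨n - 1, by omega⟩ := congrArg θ (fin_last_eq hi)
      rw [this]; exact h2
    · have hlt : i.val + 1 < n := by omega
      rw [if_neg hi, fin_add_one_val hlt, sub_nonpos]
      exact h1 i.val hlt
  · intro h
    constructor
    · intro i hi
      have := h ⟨i, by omega⟩
      rw [ip_aa, bb] at this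
      simp only [if_neg (by simp; omega : ¬((⟨i, by omega⟩ : Fin n).val + 1 = n))] at this
      rw [fin_add_one_val (by simpa using hi)] at this
      simpa [sub_nonpos] using this
    · have := h ⟨n - 1, by omega⟩
      rw [ip_aa, bb] at this
      rw [if_pos (by simp; omega), fin_add_one_last (by simp; omega)] at this
      exact this


lemma convexC [NeZero n] {lam : ℝ} {C : Set (Fin n → ℝ)}
    (hchar : ∀ θ, θ ∈ C ↔ ∀ i : Fin n, ip (aa i) θ ≤ bb lam i) : Convex ℝ C := by
  intro x hx y hy s t hs ht hst
  rw [hchar]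
  intro i
  rw [ip_add_right, ip_smul_right, ip_smul_right]
  have hx' := (hchar x).1 hx i
  have hy' := (hchar y).1 hy i
  calc s * ip (aa i) x + t * ip (aa i) y ≤ s * bb lam i + t * bb lam i := by
        apply add_le_add (mul_le_mul_of_nonneg_left hx' hs) (mul_le_mul_of_nonneg_left hy' ht)
    _ = bb lam i := by rw [← add_mul, hst, one_mul]

/-! ### projection characterization -/

/-- variational inequality from minimality, given a membership criterion closed
under segments -/
lemma proj_VI_abstract {C : Set (Fin n → ℝ)} (hconv : Convex ℝ C)
    {θhat : (Fin n → ℝ) → (Fin n → ℝ)}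
    (hproj : ∀ y, θhat y ∈ C ∧ ∀ θ ∈ C, ∑ j, (y j - θhat y j) ^ 2 ≤ ∑ j, (y j - θ j) ^ 2)
    (y : Fin n → ℝ) : ∀ θ ∈ C, ip (y - θhat y) (θ - θhat y) ≤ 0 := by
  intro θ hθ
  set p := θhat y with hp
  set d := θ - p with hd
  by_contra hcon
  push_neg at hcon
  set ε := ip (y - p) d with hε
  have hdd : 0 ≤ ip d d := ip_self_nonneg d
  set t : ℝ := min 1 (ε / (ip d d + 1)) with ht
  have ht0 : 0 < t := lt_min one_pos (div_pos hcon (by linarith))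
  have ht1 : t ≤ 1 := min_le_left _ _
  have hz : p + t • d ∈ C := by
    have := hconv (hproj y).1 hθ (a := 1 - t) (b := t) (by linarith) (le_of_lt ht0) (by ring)
    convert this using 1
    rw [hd]
    funext k
    simp
    ring
  have hmin := (hproj y).2 _ hz
  rw [sq_dist, sq_dist] at hmin
  have hexp : y - (p + t • d) = (y - p) - t • d := by funext k; simp; ring
  rw [hexp] at hmin
  rw [ip_expand (y - p) d t, ← hε] at hmin
  -- hmin : ip (y-p)(y-p) ≤ ip (y-p)(y-p) - 2 t ε + t² ip d d
  have h1 : 2 * ε ≤ t * ip d d := by nlinarith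
  have h2 : t * ip d d ≤ (ε / (ip d d + 1)) * ip d d := by
    apply mul_le_mul_of_nonneg_right (min_le_right _ _) hdd
  have h3 : (ε / (ip d d + 1)) * ip d d < ε := by
    rw [div_mul_eq_mul_div, div_lt_iff₀ (by linarith)]
    nlinarith
  linarith

lemma proj_unique {C : Set (Fin n → ℝ)} (hconv : Convex ℝ C)
    {θhat : (Fin n → ℝ) → (Fin n → ℝ)}
    (hproj : ∀ y, θhat y ∈ C ∧ ∀ θ ∈ C, ∑ j, (y j - θhat y j) ^ 2 ≤ ∑ j, (y j - θ j) ^ 2)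
    (y : Fin n → ℝ) {z : Fin n → ℝ} (hz : z ∈ C)
    (hVI : ∀ θ ∈ C, ip (y - z) (θ - z) ≤ 0) : θhat y = z := by
  have h1 := hVI (θhat y) (hproj y).1
  have h2 := proj_VI_abstract hconv hproj y z hz
  have key : ip (θhat y - z) (θhat y - z) ≤ 0 := by
    have hsplit : ip (θhat y - z) (θhat y - z)
        = ip (y - z) (θhat y - z) - ip (y - θhat y) (θhat y - z) := by
      rw [← ip_sub_left]
      congr 1
      funext k; simp
    have hneg : ip (y - θhat y) (θhat y - z) = - ip (y - θhat y) (z - θhat y) := by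
      rw [show θhat y - z = -(z - θhat y) from (neg_sub _ _).symm, ip_neg_right]
    rw [hsplit, hneg]
    linarith
  have := eq_of_ip_self_le_zero key
  have : θhat y - z = 0 := this
  funext k
  have := congrFun this k
  simpa [sub_eq_zero] using this


/-! ### the statement graph and active sets -/

section Active
variable [NeZero n]

noncomputable def Jset (lam : ℝ) (θ : Fin n → ℝ) : Finset (Fin n) :=
  @Finset.filter _ (fun j => ip (aa j) θ = bb lam j) (Classical.decPred _) Finset.univ

lemma mem_Jset {lam : ℝ} {θ : Fin n → ℝ} {j : Fin n} :
    j ∈ Jset lam θ ↔ ip (aa j) θ = bb lam j := by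
  simp [Jset]

def rel (hn : 0 < n) (lam : ℝ) (θ : Fin n → ℝ) (u v : Fin n) : Prop :=
  (∃ i : ℕ, ∃ h : i + 1 < n, u = ⟨i, Nat.lt_of_succ_lt h⟩ ∧ v = ⟨i + 1, h⟩ ∧
    θ ⟨i, Nat.lt_of_succ_lt h⟩ = θ ⟨i + 1, h⟩) ∨
  (u = ⟨n - 1, Nat.sub_lt hn Nat.one_pos⟩ ∧ v = ⟨0, hn⟩ ∧
    θ ⟨n - 1, Nat.sub_lt hn Nat.one_pos⟩ - θ ⟨0, hn⟩ = lam)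

def Gg (hn : 0 < n) (lam : ℝ) (θ : Fin n → ℝ) : SimpleGraph (Fin n) :=
  SimpleGraph.fromRel (rel hn lam θ)

lemma mk_succ_of_active (hn : 0 < n) {lam : ℝ} {θ : Fin n → ℝ} {j : Fin n}
    (hj : j ∈ Jset lam θ) :
    (Gg hn lam θ).connectedComponentMk j = (Gg hn lam θ).connectedComponentMk (j + 1) := by
  rw [mem_Jset, ip_aa] at hj
  rcases Nat.lt_or_ge (j.val + 1) n with h1 | h1
  · -- chain edge
    rw [bb, if_neg (by omega)] at hj
    have hθ : θ j = θ (j + 1) := by linarith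
    have hne : j ≠ j + 1 := by
      rw [fin_add_one_val h1]
      intro hcon
      have := congrArg Fin.val hcon
      simp at this
    have hadj : (Gg hn lam θ).Adj j (j + 1) := by
      rw [Gg, SimpleGraph.fromRel_adj]
      refine ⟨hne, Or.inl (Or.inl ⟨j.val, h1, ?_, ?_, ?_⟩)⟩
      · rfl
      · exact fin_add_one_val h1
      · rw [show (⟨j.val, by omega⟩ : Fin n) = j from rfl, ← fin_add_one_val h1]
        exact hθ
    exact SimpleGraph.ConnectedComponent.connectedComponentMk_eq_of_adj hadj
  · have h1' : j.val + 1 = n := by omega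
    rcases Nat.lt_or_ge 1 n with h2 | h2
    · -- back edge, n ≥ 2
      rw [bb, if_pos h1'] at hj
      have hne : j ≠ j + 1 := by
        rw [fin_add_one_last h1']
        intro hcon
        have := congrArg Fin.val hcon
        simp at this
        have h0 : ((0 : Fin n) : ℕ) = 0 := by simp
        omega
      have hadj : (Gg hn lam θ).Adj j (j + 1) := by
        rw [Gg, SimpleGraph.fromRel_adj]
        refine ⟨hne, Or.inl (Or.inr ⟨fin_last_eq h1', fin_add_one_last h1', ?_⟩)⟩
        rw [← fin_last_eq h1', ← fin_add_one_last h1']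
        exact hj
      exact SimpleGraph.ConnectedComponent.connectedComponentMk_eq_of_adj hadj
    · -- n = 1
      have hn1 : n = 1 := by
        have := Nat.pos_of_ne_zero (NeZero.ne n)
        omega
      subst hn1
      have : j + 1 = j := Subsingleton.elim _ _
      rw [this]

lemma eq_of_adj_VJ (hn : 0 < n) {lam : ℝ} (hlam : 0 < lam) {θ : Fin n → ℝ} {x : Fin n → ℝ}
    (hx : x ∈ VJ (Jset lam θ)) {u v : Fin n} (hadj : (Gg hn lam θ).Adj u v) : x u = x v := by
  rw [Gg, SimpleGraph.fromRel_adj] at hadj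
  obtain ⟨hne, hrel⟩ := hadj
  have key : ∀ u' v' : Fin n, rel hn lam θ u' v' → x u' = x v' := by
    intro u' v' hr
    rcases hr with ⟨i, h, hu, hv, hθ⟩ | ⟨hu, hv, hθ⟩
    · set j : Fin n := ⟨i, by omega⟩ with hjdef
      have hact : j ∈ Jset lam θ := by
        rw [mem_Jset, ip_aa, bb, if_neg (by simp [hjdef]; omega), fin_add_one_val (by simpa [hjdef] using h)]
        simp [hjdef]
        rw [sub_eq_zero]
        exact hθ
      have hx0 := hx j hact
      rw [ip_aa, sub_eq_zero] at hx0
      rw [hu, hv]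
      rw [fin_add_one_val (i := j) (by simpa [hjdef] using h)] at hx0
      exact hx0
    · set j : Fin n := ⟨n - 1, by omega⟩ with hjdef
      have hj1 : j.val + 1 = n := by simp [hjdef]; omega
      have hact : j ∈ Jset lam θ := by
        rw [mem_Jset, ip_aa, bb, if_pos hj1, fin_add_one_last hj1]
        exact hθ
      have hx0 := hx j hact
      rw [ip_aa, sub_eq_zero, fin_add_one_last hj1] at hx0
      rw [hu, hv]
      exact hx0
  rcases hrel with h | h
  · exact key u v h
  · exact (key v u h).symm

lemma const_of_component {G : SimpleGraph (Fin n)} {x : Fin n → ℝ}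
    (hadj : ∀ u v, G.Adj u v → x u = x v) {u v : Fin n}
    (h : G.connectedComponentMk u = G.connectedComponentMk v) : x u = x v := by
  have hr : G.Reachable u v := (SimpleGraph.ConnectedComponent.eq).1 h
  obtain ⟨p⟩ := hr
  induction p with
  | nil => rfl
  | cons ha p ih => exact (hadj _ _ ha).trans (ih (SimpleGraph.ConnectedComponent.sound ⟨p⟩))

lemma PP_mem_VJ (hn : 0 < n) {lam : ℝ} {θ : Fin n → ℝ} (x : Fin n → ℝ) :
    PP (Gg hn lam θ) x ∈ VJ (Jset lam θ) := by
  intro j hj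
  rw [ip_aa, sub_eq_zero]
  exact PP_eq_of_mk_eq _ (mk_succ_of_active hn hj) x

lemma ip_residual_VJ {G : SimpleGraph (Fin n)} (w : Fin n → ℝ) {x : Fin n → ℝ}
    (hx : ∀ u v : Fin n, G.connectedComponentMk u = G.connectedComponentMk v → x u = x v) :
    ip (w - PP G w) x = 0 := by
  classical
  letI : Fintype G.ConnectedComponent := Fintype.ofFinite _
  rw [ip]
  rw [← Finset.sum_fiberwise Finset.univ (fun k => G.connectedComponentMk k)
    (fun k => (w - PP G w) k * x k)]
  apply Finset.sum_eq_zero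
  intro c _
  have hfib : Finset.univ.filter (fun k => G.connectedComponentMk k = c) = fib G c := by
    rw [fib]
  rw [hfib]
  have hxc : ∀ k ∈ fib G c, x k = x (Quot.out c) := by
    intro k hk
    apply hx
    rw [(mem_fib G).1 hk]
    exact (Quot.out_eq c).symm
  calc ∑ k ∈ fib G c, (w - PP G w) k * x k
      = ∑ k ∈ fib G c, (w k - PP G w k) * x (Quot.out c) := by
        apply Finset.sum_congr rfl
        intro k hk
        rw [hxc k hk, Pi.sub_apply]
    _ = (∑ k ∈ fib G c, (w k - PP G w k)) * x (Quot.out c) := by rw [Finset.sum_mul]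
    _ = 0 := by rw [sum_fib_residual, zero_mul]

lemma Jset_ne_univ (hn : 0 < n) {lam : ℝ} (hlam : 0 < lam) {θ : Fin n → ℝ} :
    Jset lam θ ≠ Finset.univ := by
  intro hcon
  have hact : ∀ j : Fin n, ip (aa j) θ = bb lam j := by
    intro j
    have : j ∈ Jset lam θ := hcon ▸ Finset.mem_univ j
    exact mem_Jset.1 this
  have hchain : ∀ m : ℕ, ∀ hm : m < n, θ ⟨m, hm⟩ = θ ⟨0, hn⟩ := by
    intro m
    induction m with
    | zero => intro hm; rfl
    | succ m ih =>
        intro hm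
        have hm' : m < n := by omega
        have := hact ⟨m, hm'⟩
        rw [ip_aa, bb, if_neg (by show ¬(m + 1 = n); omega), sub_eq_zero,
          fin_add_one_val (by show m + 1 < n; omega)] at this
        rw [← this]
        exact ih hm'
  have hlast := hact ⟨n - 1, by omega⟩
  have hl1 : (⟨n - 1, by omega⟩ : Fin n).val + 1 = n := by show n - 1 + 1 = n; omega
  rw [ip_aa, bb, if_pos hl1, fin_add_one_last hl1] at hlast
  rw [hchain (n-1) (by omega)] at hlast
  rw [sub_self] at hlast
  linarith

end Active


/-! ### feasible directions, multiplier signs, local affinity -/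

section Local
variable [NeZero n] (hn : 0 < n) {lam : ℝ} (hlam : 0 < lam) {C : Set (Fin n → ℝ)}
  (hmemC : ∀ θ, θ ∈ C ↔ ∀ i : Fin n, ip (aa i) θ ≤ bb lam i)
  {θhat : (Fin n → ℝ) → (Fin n → ℝ)}
  (hproj : ∀ y, θhat y ∈ C ∧ ∀ θ ∈ C, ∑ j, (y j - θhat y j) ^ 2 ≤ ∑ j, (y j - θ j) ^ 2)

include hn hlam hmemC hproj

lemma feasible_dir (y₀ d : Fin n → ℝ)
    (hd : ∀ j ∈ Jset lam (θhat y₀), ip (aa j) d ≤ 0) :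
    ∃ t : ℝ, 0 < t ∧ θhat y₀ + t • d ∈ C := by
  classical
  set θ := θhat y₀ with hθdef
  have hθC : ∀ i, ip (aa i) θ ≤ bb lam i := (hmemC θ).1 (hproj y₀).1
  set Jc := Finset.univ \ Jset lam θ with hJc
  by_cases hne : Jc.Nonempty
  · set t := min 1 (Jc.inf' hne fun k => (bb lam k - ip (aa k) θ) / (|ip (aa k) d| + 1)) with ht
    have hgap : ∀ k ∈ Jc, 0 < bb lam k - ip (aa k) θ := by
      intro k hk
      have hk' : k ∉ Jset lam θ := (Finset.mem_sdiff.1 hk).2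
      have := hθC k
      rcases lt_or_eq_of_le this with h | h
      · linarith
      · exact absurd (mem_Jset.2 h) hk'
    have ht0 : 0 < t := by
      rw [ht]
      apply lt_min one_pos
      rw [Finset.lt_inf'_iff]
      intro k hk
      exact div_pos (hgap k hk) (by positivity)
    refine ⟨t, ht0, ?_⟩
    rw [hmemC]
    intro k
    rw [ip_add_right, ip_smul_right]
    by_cases hk : k ∈ Jset lam θ
    · have h1 := mem_Jset.1 hk
      have h2 := hd k (hθdef ▸ hk)
      nlinarith
    · have hkJc : k ∈ Jc := Finset.mem_sdiff.2 ⟨Finset.mem_univ k, hk⟩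
      have hle : t ≤ (bb lam k - ip (aa k) θ) / (|ip (aa k) d| + 1) :=
        le_trans (min_le_right _ _) (Finset.inf'_le _ hkJc)
      have h3 : t * ip (aa k) d ≤ t * |ip (aa k) d| :=
        mul_le_mul_of_nonneg_left (le_abs_self _) ht0.le
      have h4 : t * |ip (aa k) d| ≤ ((bb lam k - ip (aa k) θ) / (|ip (aa k) d| + 1)) * |ip (aa k) d| :=
        mul_le_mul_of_nonneg_right hle (abs_nonneg _)
      have h5 : ((bb lam k - ip (aa k) θ) / (|ip (aa k) d| + 1)) * |ip (aa k) d|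
          < bb lam k - ip (aa k) θ := by
        rw [div_mul_eq_mul_div, div_lt_iff₀ (by positivity)]
        have := hgap k hkJc
        nlinarith [abs_nonneg (ip (aa k) d)]
      linarith
  · -- all constraints active
    refine ⟨1, one_pos, ?_⟩
    rw [hmemC]
    intro k
    have hk : k ∈ Jset lam θ := by
      by_contra hk
      exact hne ⟨k, Finset.mem_sdiff.2 ⟨Finset.mem_univ k, hk⟩⟩
    have h1 := mem_Jset.1 hk
    have h2 := hd k hk
    rw [ip_add_right, ip_smul_right]
    nlinarith

lemma ip_v_le_zero_of_feasible (hconv : Convex ℝ C) (y₀ d : Fin n → ℝ)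
    (hd : ∀ j ∈ Jset lam (θhat y₀), ip (aa j) d ≤ 0) :
    ip (y₀ - θhat y₀) d ≤ 0 := by
  obtain ⟨t, ht0, htC⟩ := feasible_dir hn hlam hmemC hproj y₀ d hd
  have hVI := proj_VI_abstract hconv hproj y₀ (θhat y₀ + t • d) htC
  have : θhat y₀ + t • d - θhat y₀ = t • d := by
    funext k; simp
  rw [this, ip_smul_right] at hVI
  nlinarith

lemma v_mem_WJ (hconv : Convex ℝ C) (y₀ : Fin n → ℝ) :
    y₀ - θhat y₀ ∈ WJ (Jset lam (θhat y₀)) := by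
  apply mem_WJ_of_perp (Jset_ne_univ hn hlam)
  intro x hx
  have h1 : ip (y₀ - θhat y₀) x ≤ 0 :=
    ip_v_le_zero_of_feasible hn hlam hmemC hproj hconv y₀ x (fun j hj => (hx j hj).le)
  have h2 : ip (y₀ - θhat y₀) (-x) ≤ 0 := by
    apply ip_v_le_zero_of_feasible hn hlam hmemC hproj hconv y₀ (-x)
    intro j hj
    rw [ip_neg_right, hx j hj, neg_zero]
  rw [ip_neg_right] at h2
  linarith

lemma coeff_nonneg (hconv : Convex ℝ C) (y₀ : Fin n → ℝ)
    {c : (Jset lam (θhat y₀) : Finset (Fin n)) → ℝ}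
    (hrep : y₀ - θhat y₀ = ∑ j : (Jset lam (θhat y₀) : Finset (Fin n)), c j • aa (j : Fin n)) :
    ∀ i, 0 ≤ c i := by
  intro i
  obtain ⟨d, hd⟩ := exists_dual (Jset_ne_univ hn hlam (θ := θhat y₀)) i.2
  have hle : ip (y₀ - θhat y₀) (-d) ≤ 0 := by
    apply ip_v_le_zero_of_feasible hn hlam hmemC hproj hconv y₀ (-d)
    intro j hj
    rw [ip_neg_right, hd j hj]
    by_cases h : j = (i : Fin n) <;> simp [h]
  rw [ip_neg_right] at hle
  have : ip (y₀ - θhat y₀) d = c i := by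
    rw [hrep]
    have := coeff_eq_ip_dual (J := Jset lam (θhat y₀)) (c := c) (d := d) i.2 hd
    rw [this]
  linarith [this ▸ hle]


omit hn hlam hmemC hproj in
lemma ip_cont {f : (Fin n → ℝ) → (Fin n → ℝ)} (hf : Continuous f) (w : Fin n → ℝ) :
    Continuous fun y => ip w (f y) := by
  apply continuous_finset_sum
  intro i _
  exact continuous_const.mul ((continuous_apply i).comp hf)

theorem local_eq (hconv : Convex ℝ C) (y₀ : Fin n → ℝ)
    (hgood : ∃ c : (Jset lam (θhat y₀) : Finset (Fin n)) → ℝ, (∀ j, 0 < c j) ∧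
      y₀ - θhat y₀ = ∑ j, c j • aa (j : Fin n)) :
    ∀ᶠ y in nhds y₀, θhat y = θhat y₀ + PP (Gg hn lam (θhat y₀)) (y - y₀) := by
  classical
  obtain ⟨c, hcpos, hcrep⟩ := hgood
  set G := Gg hn lam (θhat y₀) with hGdef
  have hJne := Jset_ne_univ hn hlam (θ := θhat y₀)
  choose dd hdd using (fun i : (Jset lam (θhat y₀) : Finset (Fin n)) => exists_dual hJne i.2)
  set T : (Fin n → ℝ) → (Fin n → ℝ) := fun y => θhat y₀ + PP G (y - y₀) with hTdef
  set r : (Fin n → ℝ) → (Fin n → ℝ) := fun y => (y - y₀) - PP G (y - y₀) with hrdef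
  have hPc : Continuous (PP G) := (Plin G).continuous_of_finiteDimensional
  have hsubc : Continuous (fun y : Fin n → ℝ => y - y₀) := continuous_id.sub continuous_const
  have hTc : Continuous T := continuous_const.add (hPc.comp hsubc)
  have hrc : Continuous r := hsubc.sub (hPc.comp hsubc)
  have hPP0 : PP G (0 : Fin n → ℝ) = 0 := (Plin G).map_zero
  have hT0 : T y₀ = θhat y₀ := by
    rw [hTdef]; simp only [sub_self, hPP0, add_zero]
  have hr0 : r y₀ = 0 := by
    rw [hrdef]; simp only [sub_self, hPP0, sub_zero]
  have hθC := (hmemC (θhat y₀)).1 (hproj y₀).1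
  have hev1 : ∀ᶠ y in nhds y₀, ∀ k, k ∉ Jset lam (θhat y₀) → ip (aa k) (T y) < bb lam k := by
    rw [Filter.eventually_all]
    intro k
    by_cases hk : k ∈ Jset lam (θhat y₀)
    · filter_upwards with y hkk
      exact absurd hk hkk
    · have hlt : ip (aa k) (T y₀) < bb lam k := by
        rw [hT0]
        rcases lt_or_eq_of_le (hθC k) with h | h
        · exact h
        · exact absurd (mem_Jset.2 h) hk
      filter_upwards [((ip_cont hTc (aa k)).tendsto y₀).eventually_lt_const hlt] with y hy _
      exact hy
  have hev2 : ∀ᶠ y in nhds y₀, ∀ i : (Jset lam (θhat y₀) : Finset (Fin n)),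
      0 < c i + ip (dd i) (r y) := by
    rw [Filter.eventually_all]
    intro i
    have hval : c i + ip (dd i) (r y₀) = c i := by
      rw [hr0]
      simp [ip]
    have hcont : Continuous fun y => c i + ip (dd i) (r y) :=
      continuous_const.add (ip_cont hrc (dd i))
    exact (hcont.tendsto y₀).eventually_const_lt (by rw [hval]; exact hcpos i)
  filter_upwards [hev1, hev2] with y h1 h2
  have hTyJ : ∀ j ∈ Jset lam (θhat y₀), ip (aa j) (T y) = bb lam j := by
    intro j hj
    rw [show T y = θhat y₀ + PP G (y - y₀) from rfl, ip_add_right,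
      mem_Jset.1 hj, (PP_mem_VJ hn (y - y₀)) j hj, add_zero]
  have hTyC : T y ∈ C := by
    rw [hmemC]
    intro k
    by_cases hk : k ∈ Jset lam (θhat y₀)
    · exact (hTyJ k hk).le
    · exact (h1 k hk).le
  have hrW : r y ∈ WJ (Jset lam (θhat y₀)) := by
    apply mem_WJ_of_perp hJne
    intro x hx
    exact ip_residual_VJ (y - y₀)
      (fun u v h => const_of_component (fun u' v' hadj => eq_of_adj_VJ hn hlam hx hadj) h)
  obtain ⟨c', hc'⟩ := mem_WJ_iff_exists.1 hrW
  have hcoefeq : ∀ i : (Jset lam (θhat y₀) : Finset (Fin n)), c' i = ip (dd i) (r y) := by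
    intro i
    have hcd := coeff_eq_ip_dual (c := c') (d := dd i) i.2 (hdd i)
    rw [← hc'] at hcd
    rw [← hcd, ip_comm]
  have hyT : y - T y = ∑ j : (Jset lam (θhat y₀) : Finset (Fin n)), (c' j + c j) • aa (j : Fin n) := by
    have h0 : y - T y = r y + (y₀ - θhat y₀) := by
      funext k
      simp only [hTdef, hrdef, Pi.sub_apply, Pi.add_apply]
      ring
    rw [h0, hc', hcrep, ← Finset.sum_add_distrib]
    apply Finset.sum_congr rfl
    intro j _
    rw [add_smul]
  have hVI : ∀ θ ∈ C, ip (y - T y) (θ - T y) ≤ 0 := by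
    intro θ hθ
    rw [hyT, ip_sum_left]
    apply Finset.sum_nonpos
    intro j _
    rw [ip_smul_left]
    have ha : 0 ≤ c' j + c j := by
      have := h2 j
      rw [hcoefeq j]
      linarith
    have hb : ip (aa (j : Fin n)) (θ - T y) ≤ 0 := by
      rw [ip_sub_right, hTyJ (j : Fin n) j.2]
      exact sub_nonpos.2 ((hmemC θ).1 hθ (j : Fin n))
    exact mul_nonpos_iff.2 (Or.inl ⟨ha, hb⟩)
  exact proj_unique hconv hproj y hTyC hVI

end Local


/-! ### the bad set -/

section Bad
variable [NeZero n]

def Kspace (J : Finset (Fin n)) (i : Fin n) : Submodule ℝ (Fin n → ℝ) :=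
  VJ J ⊔ WJ (J.erase i)

lemma WJ_erase_le {J : Finset (Fin n)} {i : Fin n} : WJ (J.erase i) ≤ WJ J := by
  apply Submodule.span_mono
  rintro _ ⟨j, rfl⟩
  exact ⟨⟨(j : Fin n), Finset.mem_of_mem_erase j.2⟩, rfl⟩

lemma Kspace_ne_top {J : Finset (Fin n)} (hJ : J ≠ Finset.univ) {i : Fin n} (hi : i ∈ J) :
    Kspace J i ≠ ⊤ := by
  intro htop
  have haiK : aa i ∈ Kspace J i := htop ▸ Submodule.mem_top
  obtain ⟨u, hu, w, hw, huw⟩ := Submodule.mem_sup.1 haiK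
  have haiW : aa i ∈ WJ J := Submodule.subset_span ⟨⟨i, hi⟩, rfl⟩
  have huW : u ∈ WJ J := by
    have : u = aa i - w := by rw [← huw]; abel
    rw [this]
    exact Submodule.sub_mem _ haiW (WJ_erase_le hw)
  have hu0 : u = 0 := by
    have : u ∈ WJ J ⊓ VJ J := ⟨huW, hu⟩
    rw [WJ_inf_VJ, Submodule.mem_bot] at this
    exact this
  have haw : aa i = w := by rw [← huw, hu0, zero_add]
  have hspan : aa i ∈ Submodule.span ℝ
      ((fun j : J => aa (j : Fin n)) '' {j : J | (j : Fin n) ≠ i}) := by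
    apply Submodule.span_le.2 ?_ (haw ▸ hw)
    rintro _ ⟨j, rfl⟩
    apply Submodule.subset_span
    exact ⟨⟨(j : Fin n), Finset.mem_of_mem_erase j.2⟩, Finset.ne_of_mem_erase j.2, rfl⟩
  have hindep := indep_aa hJ
  exact hindep.notMem_span_image (x := ⟨i, hi⟩) (by simp) hspan

def TJi (lam : ℝ) (J : Finset (Fin n)) (i : Fin n) : Set (Fin n → ℝ) :=
  {y | ∃ x : Fin n → ℝ, (∀ j ∈ J, ip (aa j) x = bb lam j) ∧ y - x ∈ Kspace J i}

lemma TJi_null {lam : ℝ} {J : Finset (Fin n)} (hJ : J ≠ Finset.univ) {i : Fin n} (hi : i ∈ J) :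
    volume (TJi lam J i) = 0 := by
  by_cases hne : (TJi lam J i).Nonempty
  · obtain ⟨y₁, x₁, hx₁, hk₁⟩ := hne
    have hsub : TJi lam J i ⊆ {y | y - x₁ ∈ Kspace J i} := by
      rintro y ⟨x, hx, hk⟩
      have hxx : x - x₁ ∈ VJ J := by
        intro j hj
        rw [ip_sub_right, hx j hj, hx₁ j hj, sub_self]
      have hdec : y - x₁ = (y - x) + (x - x₁) := by abel
      show y - x₁ ∈ Kspace J i
      rw [hdec]
      exact Submodule.add_mem _ hk (Submodule.mem_sup_left hxx)
    apply measure_mono_null hsub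
    have hset : {y : Fin n → ℝ | y - x₁ ∈ Kspace J i}
        = (fun y => -x₁ + y) ⁻¹' (Kspace J i : Set (Fin n → ℝ)) := by
      ext y
      simp only [Set.mem_setOf_eq, Set.mem_preimage, SetLike.mem_coe]
      rw [neg_add_eq_sub]
    rw [hset, measure_preimage_add]
    exact Measure.addHaar_submodule volume _ (Kspace_ne_top hJ hi)
  · rw [Set.not_nonempty_iff_eq_empty.1 hne]
    simp

noncomputable def badSet (lam : ℝ) : Set (Fin n → ℝ) :=
  ⋃ (J : Finset (Fin n)) (i : Fin n) (_ : J ≠ Finset.univ) (_ : i ∈ J), TJi lam J i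

lemma badSet_null (lam : ℝ) : volume (badSet (n := n) lam) = 0 := by
  apply measure_iUnion_null
  intro J
  apply measure_iUnion_null
  intro i
  apply measure_iUnion_null
  intro hJ
  apply measure_iUnion_null
  intro hi
  exact TJi_null hJ hi

end Bad

section Good
variable [NeZero n] (hn : 0 < n) {lam : ℝ} (hlam : 0 < lam) {C : Set (Fin n → ℝ)}
  (hmemC : ∀ θ, θ ∈ C ↔ ∀ i : Fin n, ip (aa i) θ ≤ bb lam i)
  {θhat : (Fin n → ℝ) → (Fin n → ℝ)}
  (hproj : ∀ y, θhat y ∈ C ∧ ∀ θ ∈ C, ∑ j, (y j - θhat y j) ^ 2 ≤ ∑ j, (y j - θ j) ^ 2)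

include hn hlam hmemC hproj in
lemma good_of_not_bad (hconv : Convex ℝ C) (y₀ : Fin n → ℝ) (hy₀ : y₀ ∉ badSet (n := n) lam) :
    ∃ c : (Jset lam (θhat y₀) : Finset (Fin n)) → ℝ, (∀ j, 0 < c j) ∧
      y₀ - θhat y₀ = ∑ j, c j • aa (j : Fin n) := by
  classical
  have hJne := Jset_ne_univ hn hlam (θ := θhat y₀)
  obtain ⟨c, hc⟩ := mem_WJ_iff_exists.1 (v_mem_WJ hn hlam hmemC hproj hconv y₀)
  refine ⟨c, fun i => ?_, hc⟩
  rcases lt_or_eq_of_le (coeff_nonneg hn hlam hmemC hproj hconv y₀ hc i) with h | h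
  · exact h
  · exfalso
    apply hy₀
    have hmem : y₀ ∈ TJi lam (Jset lam (θhat y₀)) (i : Fin n) := by
      refine ⟨θhat y₀, fun j hj => mem_Jset.1 hj, ?_⟩
      rw [hc]
      apply Submodule.mem_sup_right
      apply Submodule.sum_mem
      intro j _
      by_cases hji : j = i
      · rw [hji, ← h, zero_smul]
        exact Submodule.zero_mem _
      · apply Submodule.smul_mem
        apply Submodule.subset_span
        refine ⟨⟨(j : Fin n), Finset.mem_erase.2 ⟨?_, j.2⟩⟩, rfl⟩
        intro hcon
        exact hji (Subtype.ext hcon)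
    exact Set.mem_iUnion.2 ⟨Jset lam (θhat y₀), Set.mem_iUnion.2 ⟨(i : Fin n),
      Set.mem_iUnion.2 ⟨hJne, Set.mem_iUnion.2 ⟨i.2, hmem⟩⟩⟩⟩

end Good


/-! ### pointwise differentiability and divergence on the good set -/

section Final
variable [NeZero n] (hn : 0 < n) {lam : ℝ} (hlam : 0 < lam) {C : Set (Fin n → ℝ)}
  (hmemC : ∀ θ, θ ∈ C ↔ ∀ i : Fin n, ip (aa i) θ ≤ bb lam i)
  {θhat : (Fin n → ℝ) → (Fin n → ℝ)}
  (hproj : ∀ y, θhat y ∈ C ∧ ∀ θ ∈ C, ∑ j, (y j - θhat y j) ^ 2 ≤ ∑ j, (y j - θ j) ^ 2)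

include hn hlam hmemC hproj in
lemma main_pointwise (hconv : Convex ℝ C) (y : Fin n → ℝ) (hnb : y ∉ badSet (n := n) lam) :
    DifferentiableAt ℝ θhat y ∧
      divg θhat y = (Nat.card (Gg hn lam (θhat y)).ConnectedComponent : ℝ) := by
  classical
  have hgood := good_of_not_bad hn hlam hmemC hproj hconv y hnb
  have hev := local_eq hn hlam hmemC hproj hconv y hgood
  set G := Gg hn lam (θhat y) with hG
  letI : Fintype G.ConnectedComponent := Fintype.ofFinite _
  set Pc : (Fin n → ℝ) →L[ℝ] (Fin n → ℝ) := LinearMap.toContinuousLinearMap (Plin G) with hPc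
  have hPcapp : ∀ z, Pc z = PP G z := fun z => rfl
  have hA : (fun y' => θhat y + PP G (y' - y)) = fun y' => (θhat y - PP G y) + Pc y' := by
    funext y'
    have hsub : PP G (y' - y) = PP G y' - PP G y := (Plin G).map_sub y' y
    rw [hPcapp, hsub]
    abel
  have heq : θhat =ᶠ[nhds y] fun y' => (θhat y - PP G y) + Pc y' := by
    filter_upwards [hev] with y' h
    rw [h]
    exact congrFun hA y'
  have hdA : DifferentiableAt ℝ (fun y' => (θhat y - PP G y) + Pc y') y :=
    (Pc.differentiableAt).const_add _
  have hdiff : DifferentiableAt ℝ θhat y := heq.differentiableAt_iff.2 hdA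
  have hfd : fderiv ℝ θhat y = Pc := by
    rw [heq.fderiv_eq, fderiv_const_add]
    exact Pc.fderiv
  refine ⟨hdiff, ?_⟩
  show (∑ i, fderiv ℝ θhat y (Pi.single i 1) i) = _
  rw [hfd]
  have hterm : ∀ i : Fin n, Pc (Pi.single i 1) i = PP G (Pi.single i 1) i :=
    fun i => by rw [hPcapp]
  rw [Finset.sum_congr rfl (fun i _ => hterm i), trace_PP]
  rw [Nat.card_eq_fintype_card]

end Final
end BddIso

/-- For the metric projection `θ̂_λ` onto the bounded isotonic set
`C = {θ : θ₁ ≤ ⋯ ≤ θ_n, θ_n − θ₁ ≤ λ}`, for almost every `y` the map `θ̂_λ` is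
differentiable at `y` and its divergence equals the number of connected components of
the graph `G_{J_y}` on `{1,…,n}` whose edges are the binding constraints:
an edge `{i, i+1}` whenever `θ̂_λ(y)_i = θ̂_λ(y)_{i+1}`, and an edge `{n, 1}` whenever
`θ̂_λ(y)_n − θ̂_λ(y)_1 = λ`. -/
theorem divergence_bounded_isotonic {n : ℕ} (hn : 0 < n) (lam : ℝ) (hlam : 0 < lam)
    (C : Set (Fin n → ℝ))
    (hC : C = {θ | (∀ i : ℕ, ∀ h : i + 1 < n, θ ⟨i, by omega⟩ ≤ θ ⟨i + 1, h⟩) ∧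
      θ ⟨n - 1, by omega⟩ - θ ⟨0, hn⟩ ≤ lam})
    (θhat : (Fin n → ℝ) → (Fin n → ℝ))
    (hproj : ∀ y, θhat y ∈ C ∧ ∀ θ ∈ C, ∑ j, (y j - θhat y j) ^ 2 ≤ ∑ j, (y j - θ j) ^ 2) :
    ∀ᵐ y ∂(volume : Measure (Fin n → ℝ)), DifferentiableAt ℝ θhat y ∧
      divg θhat y =
        (Nat.card (SimpleGraph.fromRel (fun u v : Fin n =>
          (∃ i : ℕ, ∃ h : i + 1 < n, u = ⟨i, by omega⟩ ∧ v = ⟨i + 1, h⟩ ∧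
            θhat y ⟨i, by omega⟩ = θhat y ⟨i + 1, h⟩) ∨
          (u = ⟨n - 1, by omega⟩ ∧ v = ⟨0, hn⟩ ∧
            θhat y ⟨n - 1, by omega⟩ - θhat y ⟨0, hn⟩ = lam))).ConnectedComponent : ℝ) := by
  haveI : NeZero n := ⟨hn.ne'⟩
  have hchar : ∀ θ, θ ∈ C ↔ ∀ i : Fin n, BddIso.ip (BddIso.aa i) θ ≤ BddIso.bb lam i :=
    fun θ => BddIso.memC_iff hn lam hC θ
  have hconv : Convex ℝ C := BddIso.convexC hchar
  rw [MeasureTheory.ae_iff]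
  apply measure_mono_null _ (BddIso.badSet_null (n := n) lam)
  intro y hy
  by_contra hnb
  apply hy
  have hmain := BddIso.main_pointwise hn hlam hchar hproj hconv y hnb
  exact ⟨hmain.1, hmain.2⟩
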